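/- arXiv:2107.05816 — 2 statements merged into one kernel-verified Lean document; each statement's English description precedes it below -/
import Mathlib

section
/- Let A₀ be symmetric and A₁ positive definite n×n matrices. Every local minimizer of the Rayleigh quotient x ↦ (x^T A₀ x)/(x^T A₁ x) over nonzero x ∈ R^n is a global minimizer. -/
open Matrix

/-- The quadratic form `xᵀ A x` on Euclidean space. -/
noncomputable def quadForm {n : ℕ} (A : Matrix (Fin n) (Fin n) ℝ)
    (x : EuclideanSpace ℝ (Fin n)) : ℝ :=
  ∑ i, ∑ j, A i j * x i * x j

lemma quadForm_smul {n : ℕ} (A : Matrix (Fin n) (Fin n) ℝ) (a : ℝ)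
    (x : EuclideanSpace ℝ (Fin n)) : quadForm A (a • x) = a ^ 2 * quadForm A x := by
  simp only [quadForm, PiLp.smul_apply, smul_eq_mul, Finset.mul_sum]
  exact Finset.sum_congr rfl fun i _ => Finset.sum_congr rfl fun j _ => by ring

lemma quadForm_add_smul {n : ℕ} (A : Matrix (Fin n) (Fin n) ℝ)
    (x y : EuclideanSpace ℝ (Fin n)) (t : ℝ) :
    quadForm A (x + t • y) =
      quadForm A x + t * (∑ i, ∑ j, A i j * (x i * y j + y i * x j))
        + t ^ 2 * quadForm A y := by
  simp only [quadForm, PiLp.add_apply, PiLp.smul_apply, smul_eq_mul, Finset.mul_sum,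
    ← Finset.sum_add_distrib]
  exact Finset.sum_congr rfl fun i _ => Finset.sum_congr rfl fun j _ => by ring

theorem stmt7 {n : ℕ} (A₀ A₁ : Matrix (Fin n) (Fin n) ℝ) (h0 : A₀ᵀ = A₀) (h1 : A₁ᵀ = A₁)
    (hpd : ∀ x : EuclideanSpace ℝ (Fin n), x ≠ 0 → 0 < quadForm A₁ x)
    (xs : EuclideanSpace ℝ (Fin n)) (hxs : xs ≠ 0)
    (hloc : ∃ ε > 0, ∀ x : EuclideanSpace ℝ (Fin n), x ≠ 0 → ‖x - xs‖ < ε →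
      quadForm A₀ xs / quadForm A₁ xs ≤ quadForm A₀ x / quadForm A₁ x) :
    ∀ x : EuclideanSpace ℝ (Fin n), x ≠ 0 →
      quadForm A₀ xs / quadForm A₁ xs ≤ quadForm A₀ x / quadForm A₁ x := by
  obtain ⟨ε, hε, hloc⟩ := hloc
  intro x hx
  by_contra hlt
  push_neg at hlt
  set c := quadForm A₀ xs / quadForm A₁ xs with hc
  have hq1xs := hpd xs hxs
  have hq1x := hpd x hx
  by_cases hdep : ∃ a : ℝ, x = a • xs
  · obtain ⟨a, rfl⟩ := hdep
    have ha : a ≠ 0 := by rintro rfl; simp at hx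
    rw [quadForm_smul, quadForm_smul, mul_div_mul_left _ _ (pow_ne_zero 2 ha)] at hlt
    rw [← hc] at hlt
    exact lt_irrefl c hlt
  · have hne : ∀ t : ℝ, xs + t • x ≠ 0 := by
      intro t h
      have hxs' : xs = (-t) • x := by
        rw [add_eq_zero_iff_eq_neg] at h; rw [h, neg_smul]
      by_cases ht : t = 0
      · subst ht; simp at hxs'; exact hxs hxs'
      · refine hdep ⟨-t⁻¹, ?_⟩
        rw [hxs', smul_smul, show (-t⁻¹ * -t) = 1 by field_simp, one_smul]
    set β := (∑ i, ∑ j, A₀ i j * (xs i * x j + x i * xs j))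
        - c * (∑ i, ∑ j, A₁ i j * (xs i * x j + x i * xs j)) with hβ
    set γ := quadForm A₀ x - c * quadForm A₁ x with hγ
    have hγneg : γ < 0 := by
      rw [div_lt_iff₀ hq1x] at hlt
      rw [hγ]; linarith
    have h00 : quadForm A₀ xs - c * quadForm A₁ xs = 0 := by
      rw [hc]; field_simp; ring
    have hxnorm : (0:ℝ) < ‖x‖ := norm_pos_iff.mpr hx
    set δ : ℝ := ε / (2 * ‖x‖) with hδ
    have hδpos : 0 < δ := by positivity
    set t : ℝ := if 0 ≤ β then -δ else δ with ht
    have ht0 : t ≠ 0 := by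
      rw [ht]; split <;> [exact neg_ne_zero.mpr (ne_of_gt hδpos); exact ne_of_gt hδpos]
    have htβ : t * β ≤ 0 := by
      rw [ht]; split
      · next hb => nlinarith
      · next hb => nlinarith [not_le.mp hb]
    have habs : |t| = δ := by
      rw [ht]; split <;> simp [abs_of_pos hδpos, abs_of_neg (neg_neg_iff_pos.mpr hδpos)]
    have hy : xs + t • x ≠ 0 := hne t
    have hval : quadForm A₀ (xs + t • x) - c * quadForm A₁ (xs + t • x)
        = t * β + t ^ 2 * γ := by
      rw [quadForm_add_smul, quadForm_add_smul, hβ, hγ]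
      linear_combination h00
    have hneg : quadForm A₀ (xs + t • x) - c * quadForm A₁ (xs + t • x) < 0 := by
      rw [hval]
      have h2 : t ^ 2 * γ < 0 := mul_neg_of_pos_of_neg (by positivity) hγneg
      linarith
    have hclose : ‖(xs + t • x) - xs‖ < ε := by
      have : (xs + t • x) - xs = t • x := by abel
      rw [this, norm_smul, Real.norm_eq_abs, habs, hδ]
      rw [div_mul_eq_mul_div]
      rw [div_lt_iff₀ (by positivity)]
      nlinarith
    have hge := hloc _ hy hclose
    have hq1y := hpd _ hy
    rw [le_div_iff₀ hq1y] at hge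
    linarith
end

section
/- Let n ≥ 3 and q_i(x) = xᵀA_ix for symmetric matrices A₀, A₁, A₂ ∈ R^{n×n}. Assume (C1) there exist μ₁, μ₂ with μ₁A₁+μ₂A₂ positive definite and (C2) there exists x⁰ with q₁(x⁰)=1, q₂(x⁰)<1. If x* is a local minimizer of q₀ over {x : q₁(x)=1, q₂(x) ≤ 1} with q₂(x*) = 1 and the gradients A₁x* and A₂x* are linearly dependent, then x* is a global minimizer (additionally assume (C3) there exists x¹ with q₁(x¹)=1, q₂(x¹)>1). -/
open Matrix Filter

section helpers

variable {n : ℕ}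

lemma dv_symm (A : Matrix (Fin n) (Fin n) ℝ) (h : Aᵀ = A) (x y : Fin n → ℝ) :
    x ⬝ᵥ A.mulVec y = y ⬝ᵥ A.mulVec x := by
  rw [dotProduct_mulVec, ← mulVec_transpose, h, dotProduct_comm]

lemma expand' (A : Matrix (Fin n) (Fin n) ℝ) (h : Aᵀ = A) (x y : Fin n → ℝ) :
    (x + y) ⬝ᵥ A.mulVec (x + y)
      = x ⬝ᵥ A.mulVec x + 2 * (x ⬝ᵥ A.mulVec y) + y ⬝ᵥ A.mulVec y := by
  have hs := dv_symm A h y x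
  simp [Matrix.mulVec_add, dotProduct_add, add_dotProduct]
  rw [hs]; ring

lemma expandSub (A : Matrix (Fin n) (Fin n) ℝ) (h : Aᵀ = A) (x y : Fin n → ℝ) :
    (x - y) ⬝ᵥ A.mulVec (x - y)
      = x ⬝ᵥ A.mulVec x - 2 * (x ⬝ᵥ A.mulVec y) + y ⬝ᵥ A.mulVec y := by
  have hs := dv_symm A h y x
  simp [Matrix.mulVec_sub, dotProduct_sub, sub_dotProduct]
  rw [hs]; ring

lemma dv_smul_right (A : Matrix (Fin n) (Fin n) ℝ) (r : ℝ) (x y : Fin n → ℝ) :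
    x ⬝ᵥ A.mulVec (r • y) = r * (x ⬝ᵥ A.mulVec y) := by
  rw [Matrix.mulVec_smul, dotProduct_smul, smul_eq_mul]

lemma quad_smul (A : Matrix (Fin n) (Fin n) ℝ) (r : ℝ) (x : Fin n → ℝ) :
    (r • x) ⬝ᵥ A.mulVec (r • x) = r ^ 2 * (x ⬝ᵥ A.mulVec x) := by
  rw [Matrix.mulVec_smul, dotProduct_smul, smul_dotProduct, smul_eq_mul, smul_eq_mul]; ring

lemma first_second_order {L C : ℝ}
    (h : ∀ᶠ t in nhds (0 : ℝ), 0 ≤ 2 * t * L + t ^ 2 * C) : L = 0 ∧ 0 ≤ C := by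
  rw [Metric.eventually_nhds_iff] at h
  obtain ⟨δ, hδ, H⟩ := h
  have hL : L = 0 := by
    by_contra hL0
    have hLpos : 0 < |L| := abs_pos.mpr hL0
    set η : ℝ := min (δ / (2 * (|L| + 1))) (1 / (|C| + 1)) with hη
    have hηpos : 0 < η := by
      apply lt_min
      · positivity
      · positivity
    have hη1 : η ≤ δ / (2 * (|L| + 1)) := min_le_left _ _
    have hη2 : η ≤ 1 / (|C| + 1) := min_le_right _ _
    set t : ℝ := -L * η with ht
    have hdist : dist t 0 < δ := by
      rw [Real.dist_eq, sub_zero, ht, abs_mul, abs_neg]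
      have h1 : |η| = η := abs_of_pos hηpos
      rw [h1]
      calc |L| * η ≤ |L| * (δ / (2 * (|L| + 1))) := by
            exact mul_le_mul_of_nonneg_left hη1 (abs_nonneg L)
        _ < δ := by
            have hM : (0:ℝ) < 2 * (|L| + 1) := by positivity
            rw [show |L| * (δ / (2 * (|L| + 1))) = |L| * δ / (2 * (|L| + 1)) from by ring,
              div_lt_iff₀ hM]
            nlinarith [abs_nonneg L]
    have h0 := H hdist
    have hexp : 2 * t * L + t ^ 2 * C = η * L ^ 2 * (η * C - 2) := by
      rw [ht]; ring
    have hηC : η * C < 1 := by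
      calc η * C ≤ η * |C| := mul_le_mul_of_nonneg_left (le_abs_self C) hηpos.le
        _ ≤ (1 / (|C| + 1)) * |C| := by
            exact mul_le_mul_of_nonneg_right hη2 (abs_nonneg C)
        _ < 1 := by
            rw [div_mul_eq_mul_div, div_lt_one (by positivity)]
            linarith
    have hsq : 0 < L ^ 2 := by positivity
    have hpos : 0 < η * L ^ 2 * (2 - η * C) :=
      mul_pos (mul_pos hηpos hsq) (by linarith)
    nlinarith
  refine ⟨hL, ?_⟩
  have hd2 : dist (δ / 2) (0 : ℝ) < δ := by
    rw [Real.dist_eq, sub_zero, abs_of_pos (by linarith)]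
    linarith
  have := H hd2
  rw [hL] at this
  nlinarith [pow_pos (show (0:ℝ) < δ / 2 by linarith) 2]

end helpers

lemma quadForm_eq {n : ℕ} (A : Matrix (Fin n) (Fin n) ℝ) (x : EuclideanSpace ℝ (Fin n)) :
    quadForm A x = (fun i => x i) ⬝ᵥ A.mulVec (fun i => x i) := by
  simp only [quadForm, dotProduct, Matrix.mulVec, Finset.mul_sum]
  refine Finset.sum_congr rfl fun i _ => Finset.sum_congr rfl fun j _ => by ring

theorem stmt12 {n : ℕ} (hn : 3 ≤ n) (A₀ A₁ A₂ : Matrix (Fin n) (Fin n) ℝ)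
    (h0 : A₀ᵀ = A₀) (h1 : A₁ᵀ = A₁) (h2 : A₂ᵀ = A₂)
    -- (C1)
    (hC1 : ∃ μ₁ μ₂ : ℝ, ∀ x : Fin n → ℝ, x ≠ 0 → 0 < x ⬝ᵥ (μ₁ • A₁ + μ₂ • A₂).mulVec x)
    -- (C2)
    (hC2 : ∃ x0 : Fin n → ℝ, x0 ⬝ᵥ A₁.mulVec x0 = 1 ∧ x0 ⬝ᵥ A₂.mulVec x0 < 1)
    -- (C3)
    (hC3 : ∃ x1 : Fin n → ℝ, x1 ⬝ᵥ A₁.mulVec x1 = 1 ∧ 1 < x1 ⬝ᵥ A₂.mulVec x1)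
    (xs : EuclideanSpace ℝ (Fin n))
    (hfeas1 : quadForm A₁ xs = 1) (hfeas2 : quadForm A₂ xs = 1)
    (hloc : ∃ ε > 0, ∀ x : EuclideanSpace ℝ (Fin n),
      quadForm A₁ x = 1 → quadForm A₂ x ≤ 1 → ‖x - xs‖ < ε →
      quadForm A₀ xs ≤ quadForm A₀ x)
    (hLICQfail : ¬ LinearIndependent ℝ
      ![A₁.mulVec (fun i => xs i), A₂.mulVec (fun i => xs i)]) :
    ∀ x : EuclideanSpace ℝ (Fin n), quadForm A₁ x = 1 → quadForm A₂ x ≤ 1 →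
      quadForm A₀ xs ≤ quadForm A₀ x := by
  set xv : Fin n → ℝ := fun i => xs i with hxvdef
  have hA1x : xv ⬝ᵥ A₁.mulVec xv = 1 := by rw [← quadForm_eq]; exact hfeas1
  have hA2x : xv ⬝ᵥ A₂.mulVec xv = 1 := by rw [← quadForm_eq]; exact hfeas2
  -- Step A : A₂ x* = A₁ x*
  have heq : A₂.mulVec xv = A₁.mulVec xv := by
    rw [linearIndependent_fin2] at hLICQfail
    push_neg at hLICQfail
    simp only [Matrix.cons_val_one, Matrix.head_cons, Matrix.cons_val_zero] at hLICQfail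
    rcases em (A₂.mulVec xv = 0) with hz | hz
    · exfalso; rw [hz] at hA2x; simp at hA2x
    · obtain ⟨a, ha⟩ := hLICQfail hz
      have haval : xv ⬝ᵥ (a • A₂.mulVec xv) = xv ⬝ᵥ A₁.mulVec xv := by rw [ha]
      rw [dotProduct_smul, smul_eq_mul, hA2x, hA1x, mul_one] at haval
      rw [haval, one_smul] at ha
      exact ha
  set lam : ℝ := quadForm A₀ xs with hlam
  have hlamv : lam = xv ⬝ᵥ A₀.mulVec xv := quadForm_eq A₀ xs
  -- Step C : key lemma on critical directions
  have key : ∀ d : Fin n → ℝ, A₁.mulVec xv ⬝ᵥ d = 0 →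
      d ⬝ᵥ A₂.mulVec d ≤ d ⬝ᵥ A₁.mulVec d →
      xv ⬝ᵥ A₀.mulVec d = 0 ∧ lam * (d ⬝ᵥ A₁.mulVec d) ≤ d ⬝ᵥ A₀.mulVec d := by
    intro d hd hdB
    obtain ⟨ε, hε, hmin⟩ := hloc
    have hcross1 : xv ⬝ᵥ A₁.mulVec d = 0 := by
      rw [dv_symm A₁ h1, ← dotProduct_comm]; exact hd
    have hcross2 : xv ⬝ᵥ A₂.mulVec d = 0 := by
      rw [dv_symm A₂ h2, heq, ← dotProduct_comm]; exact hd
    set Q1d : ℝ := d ⬝ᵥ A₁.mulVec d with hQ1d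
    set Q2d : ℝ := d ⬝ᵥ A₂.mulVec d with hQ2d
    set Q0d : ℝ := d ⬝ᵥ A₀.mulVec d with hQ0d
    set L : ℝ := xv ⬝ᵥ A₀.mulVec d with hLdef
    set s : ℝ → ℝ := fun t => 1 + t ^ 2 * Q1d with hsdef
    have hscont : Continuous s := by fun_prop
    have hs0 : s 0 = 1 := by simp [hsdef]
    set d' : EuclideanSpace ℝ (Fin n) := (WithLp.equiv 2 (Fin n → ℝ)).symm d with hd'
    set c : ℝ → EuclideanSpace ℝ (Fin n) :=
      fun t => (Real.sqrt (s t))⁻¹ • (xs + t • d') with hc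
    -- curve values as plain vectors
    have hcval : ∀ t : ℝ, (fun i => (c t) i) = (Real.sqrt (s t))⁻¹ • (xv + t • d) := by
      intro t
      funext i
      simp only [hc, hd', PiLp.smul_apply, PiLp.add_apply, WithLp.equiv_symm_apply, PiLp.toLp_apply,
        smul_eq_mul, Pi.add_apply, Pi.smul_apply, hxvdef]
    -- continuity of the curve
    have htend : Tendsto c (nhds 0) (nhds xs) := by
      have hst : Tendsto s (nhds 0) (nhds 1) := by
        simpa [hs0] using hscont.tendsto 0
      have hsig : Tendsto (fun t => (Real.sqrt (s t))⁻¹) (nhds 0) (nhds 1) := by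
        have h1' : Tendsto (fun t => Real.sqrt (s t)) (nhds 0) (nhds 1) := by
          simpa [Function.comp_def] using (Real.continuous_sqrt.tendsto 1).comp hst
        simpa using h1'.inv₀ one_ne_zero
      have hlin : Tendsto (fun t : ℝ => xs + t • d') (nhds 0) (nhds xs) := by
        have : Continuous (fun t : ℝ => xs + t • d') := by continuity
        simpa using this.tendsto 0
      simpa only [one_smul] using hsig.smul hlin
    have hev1 : ∀ᶠ t in nhds (0:ℝ), ‖c t - xs‖ < ε := by
      have := htend (Metric.ball_mem_nhds xs hε)
      filter_upwards [this] with t ht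
      rw [← dist_eq_norm]
      exact Metric.mem_ball.mp ht
    have hev2 : ∀ᶠ t in nhds (0:ℝ), 0 < s t := by
      have hst : Tendsto s (nhds 0) (nhds 1) := by
        simpa [hs0] using hscont.tendsto 0
      exact hst.eventually (eventually_gt_nhds one_pos)
    have hkey : ∀ᶠ t in nhds (0:ℝ), 0 ≤ 2 * t * L + t ^ 2 * (Q0d - lam * Q1d) := by
      filter_upwards [hev1, hev2] with t h1t h2t
      have hrne : Real.sqrt (s t) ≠ 0 := ne_of_gt (Real.sqrt_pos.mpr h2t)
      have hr2 : ((Real.sqrt (s t))⁻¹) ^ 2 = (s t)⁻¹ := by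
        rw [inv_pow, Real.sq_sqrt h2t.le]
      have hquad : ∀ (A : Matrix (Fin n) (Fin n) ℝ), Aᵀ = A →
          quadForm A (c t) = (s t)⁻¹ *
            (xv ⬝ᵥ A.mulVec xv + 2 * t * (xv ⬝ᵥ A.mulVec d) + t ^ 2 * (d ⬝ᵥ A.mulVec d)) := by
        intro A hA
        rw [quadForm_eq, hcval t, quad_smul, hr2]
        congr 1
        have := expand' A hA xv (t • d)
        rw [this, dv_smul_right, quad_smul]
        ring
      have hq1 : quadForm A₁ (c t) = 1 := by
        rw [hquad A₁ h1, hA1x, hcross1]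
        have hnum : 1 + 2 * t * 0 + t ^ 2 * Q1d = s t := by simp [hsdef]
        rw [hnum, inv_mul_cancel₀ h2t.ne']
      have hq2 : quadForm A₂ (c t) ≤ 1 := by
        rw [hquad A₂ h2, hA2x, hcross2]
        have hnum : 1 + 2 * t * 0 + t ^ 2 * Q2d ≤ s t := by
          simp only [hsdef]
          nlinarith [sq_nonneg t]
        calc (s t)⁻¹ * (1 + 2 * t * 0 + t ^ 2 * Q2d) ≤ (s t)⁻¹ * s t := by
              exact mul_le_mul_of_nonneg_left hnum (inv_nonneg.mpr h2t.le)
          _ = 1 := inv_mul_cancel₀ h2t.ne'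
      have hmin' := hmin (c t) hq1 hq2 h1t
      rw [hquad A₀ h0, ← hlamv] at hmin'
      have hst' : lam * s t ≤ lam + 2 * t * L + t ^ 2 * Q0d := by
        rw [hLdef, hQ0d]
        calc lam * s t = s t * lam := by ring
          _ ≤ s t * ((s t)⁻¹ * (lam + 2 * t * L + t ^ 2 * Q0d)) := by
              exact mul_le_mul_of_nonneg_left hmin' h2t.le
          _ = lam + 2 * t * (xv ⬝ᵥ A₀.mulVec d) + t ^ 2 * (d ⬝ᵥ A₀.mulVec d) := by
              rw [← mul_assoc, mul_inv_cancel₀ h2t.ne', one_mul]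
      have hsval : lam * s t = lam + t ^ 2 * (lam * Q1d) := by
        simp only [hsdef]; ring
      have hring : 2 * t * L + t ^ 2 * (Q0d - lam * Q1d)
          = (lam + 2 * t * L + t ^ 2 * Q0d) - (lam + t ^ 2 * (lam * Q1d)) := by ring
      rw [hring]
      linarith [hst', hsval]
    obtain ⟨hL, hC⟩ := first_second_order hkey
    exact ⟨hL, by linarith⟩
  -- Step D : global optimality
  intro x hx1 hx2
  set yv : Fin n → ℝ := fun i => x i with hyvdef
  have hy1 : yv ⬝ᵥ A₁.mulVec yv = 1 := by rw [← quadForm_eq]; exact hx1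
  have hy2 : yv ⬝ᵥ A₂.mulVec yv ≤ 1 := by rw [← quadForm_eq]; exact hx2
  set α : ℝ := yv ⬝ᵥ A₁.mulVec xv with hα
  set d : Fin n → ℝ := yv - α • xv with hddef
  have hyd : yv = α • xv + d := by rw [hddef]; abel
  have hd0 : A₁.mulVec xv ⬝ᵥ d = 0 := by
    rw [hddef, dotProduct_sub, dotProduct_smul, smul_eq_mul,
      dotProduct_comm _ yv, dotProduct_comm _ xv, hA1x, mul_one, ← hα, sub_self]
  -- cross terms with xv
  have hcross : ∀ (A : Matrix (Fin n) (Fin n) ℝ), Aᵀ = A → A.mulVec xv ⬝ᵥ d = 0 →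
      xv ⬝ᵥ A.mulVec d = 0 := by
    intro A hA h
    rw [dv_symm A hA, ← dotProduct_comm]; exact h
  have hd2' : A₂.mulVec xv ⬝ᵥ d = 0 := by rw [heq]; exact hd0
  have hc1 : xv ⬝ᵥ A₁.mulVec d = 0 := hcross A₁ h1 hd0
  have hc2 : xv ⬝ᵥ A₂.mulVec d = 0 := hcross A₂ h2 hd2'
  -- quadratic values at d
  have hsubexp : ∀ (A : Matrix (Fin n) (Fin n) ℝ), Aᵀ = A →
      d ⬝ᵥ A.mulVec d = yv ⬝ᵥ A.mulVec yv - 2 * α * (yv ⬝ᵥ A.mulVec xv)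
        + α ^ 2 * (xv ⬝ᵥ A.mulVec xv) := by
    intro A hA
    rw [hddef, expandSub A hA, dv_smul_right, quad_smul]
    ring
  have hB : d ⬝ᵥ A₂.mulVec d ≤ d ⬝ᵥ A₁.mulVec d := by
    rw [hsubexp A₁ h1, hsubexp A₂ h2, hA1x, hA2x]
    have hmix : yv ⬝ᵥ A₂.mulVec xv = yv ⬝ᵥ A₁.mulVec xv := by rw [heq]
    rw [hmix]
    linarith
  obtain ⟨hL0, hC0⟩ := key d hd0 hB
  -- expand Q1 and Q0 at yv = α • xv + d
  have hexp : ∀ (A : Matrix (Fin n) (Fin n) ℝ), Aᵀ = A →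
      yv ⬝ᵥ A.mulVec yv = α ^ 2 * (xv ⬝ᵥ A.mulVec xv) + 2 * α * (xv ⬝ᵥ A.mulVec d)
        + d ⬝ᵥ A.mulVec d := by
    intro A hA
    calc yv ⬝ᵥ A.mulVec yv = (α • xv + d) ⬝ᵥ A.mulVec (α • xv + d) := by rw [← hyd]
      _ = (α • xv) ⬝ᵥ A.mulVec (α • xv) + 2 * ((α • xv) ⬝ᵥ A.mulVec d)
          + d ⬝ᵥ A.mulVec d := expand' A hA _ _
      _ = α ^ 2 * (xv ⬝ᵥ A.mulVec xv) + 2 * α * (xv ⬝ᵥ A.mulVec d) + d ⬝ᵥ A.mulVec d := by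
          rw [quad_smul, smul_dotProduct, smul_eq_mul]
          ring
  have hQ1y := hexp A₁ h1
  rw [hA1x, hc1, hy1] at hQ1y
  -- hQ1y : 1 = α^2 * 1 + 2*α*0 + d ⬝ᵥ A₁.mulVec d
  have hQ0y := hexp A₀ h0
  rw [← hlamv, hL0] at hQ0y
  -- conclusion
  rw [quadForm_eq A₀ x, ← hyvdef, hQ0y]
  have e : d ⬝ᵥ A₁.mulVec d = 1 - α ^ 2 := by linarith
  rw [e] at hC0
  linarith
end
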